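/- Let Y = (Y_1, Y_2) be a standard bivariate normal vector centered at μ = (μ_1, μ_2) with identity covariance, and define B_{μ,c} = B^1 ∪ B^2 where B^i = {y : |μ_i - y_i| ≤ c and |y_i| > |y_j|, j ≠ i}. Then for a = max(|μ_1|, |μ_2|) and every c > 0, P_μ(Y ∈ B_{μ,c}) ≥ P_{(a,0)}(Y ∈ B_{(a,0),c}). -/

import Mathlib

open MeasureTheory ProbabilityTheory

/-- The acceptance region for the "larger absolute value of two" selection rule. -/
def accB (μ : ℝ × ℝ) (c : ℝ) : Set (ℝ × ℝ) :=
  {y | (|μ.1 - y.1| ≤ c ∧ |y.2| < |y.1|) ∨ (|μ.2 - y.2| ≤ c ∧ |y.1| < |y.2|)}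

open MeasureTheory intervalIntegral Real Set NNReal


noncomputable def Eg (x : ℝ) : ℝ := ∫ t in (0:ℝ)..x, Real.exp (-t^2)

lemma contExp : Continuous (fun t : ℝ => Real.exp (-t^2)) := by continuity

lemma contSqrtk (k : ℝ) : Continuous fun y : ℝ => Real.sqrt (y^2 + k) :=
  ((continuous_pow 2).add continuous_const).sqrt

lemma intExp {p q : ℝ} : IntervalIntegrable (fun t : ℝ => Real.exp (-t^2)) volume p q :=
  contExp.intervalIntegrable p q

lemma Eg_sub (p q : ℝ) : Eg q - Eg p = ∫ t in p..q, Real.exp (-t^2) := by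
  have h1 : Eg p + ∫ t in p..q, Real.exp (-t^2) = Eg q :=
    integral_add_adjacent_intervals intExp intExp
  linarith

lemma Eg_neg (x : ℝ) : Eg (-x) = - Eg x := by
  have h1 : Eg (-x) = ∫ t in (0:ℝ)..(-x), Real.exp (-(-t)^2) := by
    rw [Eg]; congr 1; ext t; rw [neg_sq]
  rw [h1, intervalIntegral.integral_comp_neg (fun t => Real.exp (-t^2)), neg_zero,
    intervalIntegral.integral_symm]
  rw [neg_neg]; rfl

lemma Eg_mono {p q : ℝ} (h : p ≤ q) : Eg p ≤ Eg q := by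
  have : 0 ≤ Eg q - Eg p := by
    rw [Eg_sub]
    apply intervalIntegral.integral_nonneg h
    intro t _; positivity
  linarith

set_option maxHeartbeats 1000000 in
/-- Master lemma. -/
lemma master {u v l1 m1 l2 m2 : ℝ} (huv : u ≤ v) (hu : 0 ≤ u)
    (hl1 : 0 ≤ l1) (hl1m1 : l1 ≤ m1) (hl2 : 0 ≤ l2)
    (h1 : l1^2 + v^2 ≤ l2^2 + u^2) (h2 : m2^2 + u^2 ≤ m1^2 + v^2) :
    Real.exp (-u^2) * (Eg m2 - Eg l2) ≤ Real.exp (-v^2) * (Eg m1 - Eg l1) := by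
  rcases le_or_gt m2 l2 with hml | hlm
  · have h1' : Eg m2 - Eg l2 ≤ 0 := by have := Eg_mono hml; linarith
    have h2' : 0 ≤ Eg m1 - Eg l1 := by have := Eg_mono hl1m1; linarith
    nlinarith [Real.exp_pos (-u^2), Real.exp_pos (-v^2)]
  · -- l2 < m2
    set k := v^2 - u^2 with hk
    have hk0 : 0 ≤ k := by nlinarith
    rcases eq_or_lt_of_le hk0 with hke | hkpos
    · -- k = 0 : u^2 = v^2
      have hvu : v^2 = u^2 := by simp [hk] at hke; linarith
      have hll : l1 ≤ l2 := by nlinarith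
      have hm1 : 0 ≤ m1 := le_trans hl1 hl1m1
      have hmm : m2 ≤ m1 := by nlinarith
      have e1 : Eg l1 ≤ Eg l2 := Eg_mono hll
      have e2 : Eg m2 ≤ Eg m1 := Eg_mono hmm
      rw [show (-u^2 : ℝ) = -v^2 by rw [hvu]]
      have := Real.exp_pos (-v^2)
      nlinarith
    · -- k > 0
      have hm2 : 0 < m2 := lt_of_le_of_lt hl2 hlm
      have hl2k : k ≤ l2^2 := by nlinarith
      set α := Real.sqrt (l2^2 - k) with hα
      set β := Real.sqrt (m2^2 - k) with hβ
      have hα0 : 0 ≤ α := Real.sqrt_nonneg _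
      have hβ0 : 0 ≤ β := Real.sqrt_nonneg _
      have hαsq : α^2 = l2^2 - k := Real.sq_sqrt (by linarith)
      have hβsq : β^2 = m2^2 - k := Real.sq_sqrt (by nlinarith)
      have hαβ : α ≤ β := by
        apply Real.sqrt_le_sqrt; nlinarith
      have hl1α : l1 ≤ α := by nlinarith
      have hm1 : 0 ≤ m1 := le_trans hl1 hl1m1
      have hβm1 : β ≤ m1 := by nlinarith
      -- change of variables
      have hg : ∀ y : ℝ, HasDerivAt (fun y => Real.sqrt (y^2 + k)) (y / Real.sqrt (y^2 + k)) y := by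
        intro y
        have h1 : HasDerivAt (fun y : ℝ => y^2 + k) (2*y) y := by
          simpa using ((hasDerivAt_pow 2 y).add_const k)
        have h2 := h1.sqrt (by positivity)
        convert h2 using 1
        field_simp
      have hsub : ∫ x in l2..m2, Real.exp (-x^2)
          = ∫ y in α..β, (y / Real.sqrt (y^2 + k)) * Real.exp (-(Real.sqrt (y^2+k))^2) := by
        have hgα : Real.sqrt (α^2 + k) = l2 := by
          rw [hαsq]; rw [show l2^2 - k + k = l2^2 by ring]; exact Real.sqrt_sq hl2
        have hgβ : Real.sqrt (β^2 + k) = m2 := by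
          rw [hβsq]; rw [show m2^2 - k + k = m2^2 by ring]; exact Real.sqrt_sq (le_of_lt hm2)
        rw [← hgα, ← hgβ]
        rw [← intervalIntegral.integral_comp_smul_deriv (f := fun y => Real.sqrt (y^2+k))
          (f' := fun y => y / Real.sqrt (y^2 + k)) (g := fun x => Real.exp (-x^2))
          (fun x _ => hg x) ?_ contExp]
        · simp [smul_eq_mul]
        · apply ContinuousOn.div
          · exact continuousOn_id
          · exact (contSqrtk k).continuousOn
          · intro x _; positivity
      have hpt : ∀ y ∈ Icc α β,
          Real.exp (-u^2) * ((y / Real.sqrt (y^2 + k)) * Real.exp (-(Real.sqrt (y^2+k))^2))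
          ≤ Real.exp (-v^2) * Real.exp (-y^2) := by
        intro y hy
        have hy0 : 0 ≤ y := le_trans hα0 hy.1
        have hsq : (Real.sqrt (y^2+k))^2 = y^2 + k := Real.sq_sqrt (by positivity)
        rw [hsq]
        have hfrac : y / Real.sqrt (y^2 + k) ≤ 1 := by
          rw [div_le_one (by positivity)]
          nlinarith [Real.sq_sqrt (show (0:ℝ) ≤ y^2 + k by positivity),
            Real.sqrt_nonneg (y^2+k)]
        have hexp : Real.exp (-u^2) * Real.exp (-(y^2+k)) = Real.exp (-v^2) * Real.exp (-y^2) := by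
          rw [← Real.exp_add, ← Real.exp_add]
          congr 1
          simp [hk]; ring
        have hfnn : 0 ≤ y / Real.sqrt (y^2 + k) := by positivity
        calc Real.exp (-u^2) * ((y / Real.sqrt (y^2 + k)) * Real.exp (-(y^2+k)))
            ≤ Real.exp (-u^2) * (1 * Real.exp (-(y^2+k))) := by
              apply mul_le_mul_of_nonneg_left _ (le_of_lt (Real.exp_pos _))
              exact mul_le_mul_of_nonneg_right hfrac (le_of_lt (Real.exp_pos _))
          _ = Real.exp (-v^2) * Real.exp (-y^2) := by rw [one_mul]; exact hexp
      -- assemble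
      have hint1 : IntervalIntegrable
          (fun y => Real.exp (-u^2) * ((y / Real.sqrt (y^2 + k)) * Real.exp (-(Real.sqrt (y^2+k))^2)))
          volume α β := by
        apply Continuous.intervalIntegrable
        apply Continuous.mul continuous_const
        apply Continuous.mul
        · exact Continuous.div continuous_id (contSqrtk k) (fun x => by positivity)
        · exact contExp.comp (contSqrtk k)
      have hint2 : IntervalIntegrable (fun y => Real.exp (-v^2) * Real.exp (-y^2)) volume α β := by
        exact (continuous_const.mul contExp).intervalIntegrable _ _
      have key : Real.exp (-u^2) * (Eg m2 - Eg l2) ≤ Real.exp (-v^2) * (Eg β - Eg α) := by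
        rw [Eg_sub, Eg_sub, hsub, ← intervalIntegral.integral_const_mul,
          ← intervalIntegral.integral_const_mul]
        exact intervalIntegral.integral_mono_on hαβ hint1 hint2 hpt
      have last : Real.exp (-v^2) * (Eg β - Eg α) ≤ Real.exp (-v^2) * (Eg m1 - Eg l1) := by
        have e1 : Eg l1 ≤ Eg α := Eg_mono hl1α
        have e2 : Eg β ≤ Eg m1 := Eg_mono hβm1
        have := Real.exp_pos (-v^2)
        nlinarith
      linarith


noncomputable def gp (x : ℝ) : ℝ := (Real.sqrt (2*Real.pi))⁻¹ * Real.exp (-x^2/2)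

noncomputable def K0 : ℝ := (Real.sqrt (2*Real.pi))⁻¹

lemma K0_pos : 0 < K0 := by
  rw [K0]
  have : 0 < Real.sqrt (2*Real.pi) := Real.sqrt_pos.mpr (by positivity)
  positivity

lemma gp_cont : Continuous gp := by
  apply Continuous.mul continuous_const
  apply Real.continuous_exp.comp
  fun_prop

lemma gp_nonneg (x : ℝ) : 0 ≤ gp x := by
  rw [gp]
  have : 0 ≤ (Real.sqrt (2*Real.pi))⁻¹ := by positivity
  positivity

lemma gp_even (x : ℝ) : gp (-x) = gp x := by rw [gp, gp, neg_sq]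

lemma gp_le (x : ℝ) : gp x ≤ K0 := by
  rw [gp, K0]
  have h1 : Real.exp (-x^2/2) ≤ 1 := by
    rw [Real.exp_le_one_iff]
    nlinarith [sq_nonneg x]
  have : 0 ≤ (Real.sqrt (2*Real.pi))⁻¹ := by positivity
  nlinarith

lemma gp_intble (p q : ℝ) : IntervalIntegrable gp volume p q := gp_cont.intervalIntegrable p q

noncomputable def Cg (x : ℝ) : ℝ := ∫ t in (0:ℝ)..x, gp t

lemma Cg_sub (p q : ℝ) : Cg q - Cg p = ∫ t in p..q, gp t := by
  have h1 : Cg p + ∫ t in p..q, gp t = Cg q :=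
    integral_add_adjacent_intervals (gp_intble 0 p) (gp_intble p q)
  linarith

lemma Cg_deriv (x : ℝ) : HasDerivAt Cg (gp x) x :=
  intervalIntegral.integral_hasDerivAt_right (gp_intble 0 x)
    (gp_cont.stronglyMeasurableAtFilter _ _) gp_cont.continuousAt

lemma Cg_lip (x y : ℝ) : |Cg x - Cg y| ≤ K0 * |x - y| := by
  rw [Cg_sub y x]
  have := intervalIntegral.norm_integral_le_of_norm_le_const (a := y) (b := x) (C := K0)
    (f := gp) (fun t _ => by rw [Real.norm_eq_abs, abs_of_nonneg (gp_nonneg t)]; exact gp_le t)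
  rw [Real.norm_eq_abs] at this
  calc |∫ t in y..x, gp t| ≤ K0 * |x - y| := this
  _ = K0 * |x - y| := rfl

noncomputable def Hr (w m : ℝ) : ℝ := Cg (w - m) - Cg (-w - m)

lemma Hr_nonneg {w : ℝ} (m : ℝ) (hw : 0 ≤ w) : 0 ≤ Hr w m := by
  rw [Hr, Cg_sub]
  apply intervalIntegral.integral_nonneg (by linarith) (fun t _ => gp_nonneg t)

lemma Hr_neg_w (w m : ℝ) : Hr (-w) m = - Hr w m := by
  rw [Hr, Hr]; ring_nf

lemma Hr_abs (w m : ℝ) : Hr |w| m = |Hr w m| := by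
  rcases le_or_gt 0 w with h | h
  · rw [abs_of_nonneg h, abs_of_nonneg (Hr_nonneg m h)]
  · rw [abs_of_neg h, Hr_neg_w w m]
    have h1 : 0 ≤ Hr (-w) m := Hr_nonneg m (by linarith)
    rw [Hr_neg_w w m] at h1
    rw [abs_of_nonpos (by linarith)]

noncomputable def Rf (a c : ℝ) (β : ℝ) : ℝ :=
  ∫ z in (-c)..c, gp z * (Hr |z+a| β + Hr |z+β| a)

noncomputable def sg (x : ℝ) : ℝ := if x < 0 then -1 else 1

noncomputable def ddf (a β : ℝ) (z : ℝ) : ℝ :=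
  gp z * (sg (z+a) * (gp (z+a+β) - gp (z+a-β)) + sg (z+β) * (gp (z+β-a) + gp (z+β+a)))

noncomputable def DD (a c β : ℝ) : ℝ := ∫ z in (-c)..c, ddf a β z

lemma Cg_cont : Continuous Cg :=
  continuous_iff_continuousAt.mpr (fun x => (Cg_deriv x).continuousAt)

lemma sg_meas : Measurable sg := by
  unfold sg
  exact Measurable.ite (measurableSet_lt measurable_id measurable_const)
    measurable_const measurable_const

lemma eq_sg1 (y β : ℝ) : gp (|y| + β) - gp (|y| - β) = sg y * (gp (y+β) - gp (y-β)) := by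
  rcases lt_or_ge y 0 with h | h
  · rw [abs_of_neg h, sg, if_pos h]
    rw [show -y + β = -(y - β) by ring, show -y - β = -(y+β) by ring, gp_even, gp_even]
    ring
  · rw [abs_of_nonneg h, sg, if_neg (not_lt.mpr h)]; ring

lemma hasDeriv_Hr1 (w β₀ : ℝ) :
    HasDerivAt (fun x => Hr w x) (gp (w + β₀) - gp (w - β₀)) β₀ := by
  have h1 : HasDerivAt (fun x : ℝ => Cg (w - x)) (gp (w - β₀) * (-1)) β₀ :=
    (Cg_deriv (w - β₀)).comp β₀ (((hasDerivAt_id β₀).const_sub w))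
  have h2 : HasDerivAt (fun x : ℝ => Cg (-w - x)) (gp (-w - β₀) * (-1)) β₀ :=
    (Cg_deriv (-w - β₀)).comp β₀ (((hasDerivAt_id β₀).const_sub (-w)))
  have := h1.sub h2
  refine this.congr_deriv ?_
  rw [show -w - β₀ = -(w + β₀) by ring, gp_even]
  ring

lemma hasDeriv_Hr2 (t a β₀ : ℝ) (ht : t + β₀ ≠ 0) :
    HasDerivAt (fun x => Hr |t + x| a) (sg (t+β₀) * (gp (t+β₀-a) + gp (t+β₀+a))) β₀ := by
  have hG : HasDerivAt (fun x => Hr (t + x) a) (gp (t+β₀-a) + gp (t+β₀+a)) β₀ := by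
    have h1 : HasDerivAt (fun x : ℝ => Cg (t + x - a)) (gp (t + β₀ - a) * 1) β₀ := by
      apply (Cg_deriv (t + β₀ - a)).comp (h := fun x => t + x - a) β₀
      simpa using (((hasDerivAt_id β₀).const_add t).sub_const a)
    have h2 : HasDerivAt (fun x : ℝ => Cg (-(t + x) - a)) (gp (-(t+β₀) - a) * (-1)) β₀ := by
      apply (Cg_deriv (-(t + β₀) - a)).comp (h := fun x => -(t + x) - a) β₀
      simpa using ((((hasDerivAt_id β₀).const_add t).neg).sub_const a)
    have := h1.sub h2
    refine this.congr_deriv ?_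
    rw [show -(t+β₀) - a = -(t+β₀+a) by ring, gp_even]
    ring
  rcases lt_or_ge (t + β₀) 0 with h | h
  · rw [sg, if_pos h]
    have hev : (fun x => Hr |t + x| a) =ᶠ[nhds β₀] (fun x => - Hr (t + x) a) := by
      have hs : Set.Iio (-t) ∈ nhds β₀ := Iio_mem_nhds (by linarith)
      filter_upwards [hs] with x hx
      have h0 : t + x < 0 := by
        have : x < -t := hx
        linarith
      rw [abs_of_neg h0, Hr_neg_w]
    apply HasDerivAt.congr_of_eventuallyEq _ hev
    exact hG.neg.congr_deriv (by ring)
  · rw [sg, if_neg (not_lt.mpr h)]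
    have h' : 0 < t + β₀ := lt_of_le_of_ne h (Ne.symm ht)
    have hev : (fun x => Hr |t + x| a) =ᶠ[nhds β₀] (fun x => Hr (t + x) a) := by
      have hs : Set.Ioi (-t) ∈ nhds β₀ := Ioi_mem_nhds (by linarith)
      filter_upwards [hs] with x hx
      have hx' : 0 ≤ t + x := by simp at hx; linarith
      rw [abs_of_nonneg hx']
    apply HasDerivAt.congr_of_eventuallyEq _ hev
    exact hG.congr_deriv (by ring)

lemma Rf_key (a c β₀ : ℝ) :
    IntervalIntegrable (ddf a β₀) volume (-c) c ∧ HasDerivAt (Rf a c) (DD a c β₀) β₀ := by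
  have key := intervalIntegral.hasDerivAt_integral_of_dominated_loc_of_lip
    (𝕜 := ℝ) (μ := volume) (a := -c) (b := c) (s := Metric.ball β₀ 1)
    (F := fun x z => gp z * (Hr |z+a| x + Hr |z+x| a))
    (F' := ddf a β₀)
    (x₀ := β₀) (bound := fun z => gp z * (4 * K0))
    (Metric.ball_mem_nhds β₀ one_pos) ?_ ?_ ?_ ?_ ?_ ?_
  · exact key
  · -- AEStronglyMeasurable of F x
    filter_upwards with x
    apply Continuous.aestronglyMeasurable
    apply gp_cont.mul
    apply Continuous.add
    · exact (Cg_cont.comp (by fun_prop)).sub (Cg_cont.comp (by fun_prop))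
    · exact (Cg_cont.comp (by fun_prop)).sub (Cg_cont.comp (by fun_prop))
  · -- IntervalIntegrable (F β₀)
    apply Continuous.intervalIntegrable
    apply gp_cont.mul
    apply Continuous.add
    · exact (Cg_cont.comp (by fun_prop)).sub (Cg_cont.comp (by fun_prop))
    · exact (Cg_cont.comp (by fun_prop)).sub (Cg_cont.comp (by fun_prop))
  · -- AEStronglyMeasurable F'
    unfold ddf
    apply Measurable.aestronglyMeasurable
    apply (gp_cont.measurable).mul
    apply Measurable.add
    · exact (sg_meas.comp (measurable_id.add_const a)).mul
        ((gp_cont.measurable.comp (by fun_prop)).sub (gp_cont.measurable.comp (by fun_prop)))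
    · exact (sg_meas.comp (measurable_id.add_const β₀)).mul
        ((gp_cont.measurable.comp (by fun_prop)).add (gp_cont.measurable.comp (by fun_prop)))
  · -- Lipschitz
    filter_upwards with t _
    apply LipschitzOnWith.of_dist_le_mul
    intro x _ y _
    rw [Real.dist_eq, Real.dist_eq]
    have hb : 0 ≤ gp t * (4 * K0) := by
      have := gp_nonneg t; have := K0_pos; positivity
    rw [show ((Real.nnabs (gp t * (4 * K0)) : ℝ≥0) : ℝ) = |gp t * (4*K0)| from rfl,
      abs_of_nonneg hb]
    have e1 : |Hr (|t+a|) x - Hr (|t+a|) y| ≤ 2 * K0 * |x - y| := by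
      rw [Hr, Hr]
      have l1 := Cg_lip (|t+a| - x) (|t+a| - y)
      have l2 := Cg_lip (-|t+a| - x) (-|t+a| - y)
      rw [show |t+a| - x - (|t+a| - y) = -(x - y) by ring, abs_neg] at l1
      rw [show -|t+a| - x - (-|t+a| - y) = -(x - y) by ring, abs_neg] at l2
      calc |Cg (|t+a| - x) - Cg (-|t+a| - x) - (Cg (|t+a| - y) - Cg (-|t+a| - y))|
          = |(Cg (|t+a| - x) - Cg (|t+a| - y)) - (Cg (-|t+a| - x) - Cg (-|t+a| - y))| := by
            ring_nf
        _ ≤ |Cg (|t+a| - x) - Cg (|t+a| - y)| + |Cg (-|t+a| - x) - Cg (-|t+a| - y)| :=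
            abs_sub _ _
        _ ≤ 2 * K0 * |x - y| := by linarith
    have e2 : |Hr (|t+x|) a - Hr (|t+y|) a| ≤ 2 * K0 * |x - y| := by
      rw [Hr_abs, Hr_abs]
      apply le_trans (abs_abs_sub_abs_le_abs_sub _ _)
      · rw [Hr, Hr]
        have l1 := Cg_lip (t+x-a) (t+y-a)
        have l2 := Cg_lip (-(t+x)-a) (-(t+y)-a)
        rw [show t+x-a - (t+y-a) = x - y by ring] at l1
        rw [show -(t+x)-a - (-(t+y)-a) = -(x - y) by ring, abs_neg] at l2
        calc |Cg (t+x-a) - Cg (-(t+x)-a) - (Cg (t+y-a) - Cg (-(t+y)-a))|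
            = |(Cg (t+x-a) - Cg (t+y-a)) - (Cg (-(t+x)-a) - Cg (-(t+y)-a))| := by ring_nf
          _ ≤ |Cg (t+x-a) - Cg (t+y-a)| + |Cg (-(t+x)-a) - Cg (-(t+y)-a)| := abs_sub _ _
          _ ≤ 2 * K0 * |x - y| := by linarith
    calc |gp t * (Hr (|t+a|) x + Hr (|t+x|) a) - gp t * (Hr (|t+a|) y + Hr (|t+y|) a)|
        = gp t * |(Hr (|t+a|) x - Hr (|t+a|) y) + (Hr (|t+x|) a - Hr (|t+y|) a)| := by
          rw [show gp t * (Hr (|t+a|) x + Hr (|t+x|) a) - gp t * (Hr (|t+a|) y + Hr (|t+y|) a)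
            = gp t * ((Hr (|t+a|) x - Hr (|t+a|) y) + (Hr (|t+x|) a - Hr (|t+y|) a)) by ring,
            abs_mul, abs_of_nonneg (gp_nonneg t)]
      _ ≤ gp t * (|Hr (|t+a|) x - Hr (|t+a|) y| + |Hr (|t+x|) a - Hr (|t+y|) a|) := by
          apply mul_le_mul_of_nonneg_left (abs_add_le _ _) (gp_nonneg t)
      _ ≤ gp t * (4 * K0) * |x - y| := by
          have := gp_nonneg t
          nlinarith [abs_nonneg (x - y)]
  · -- bound integrable
    exact (gp_cont.mul continuous_const).intervalIntegrable _ _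
  · -- ae HasDerivAt
    have hae : ∀ᵐ t : ℝ ∂volume, t ≠ -β₀ := by
      have h0 : (volume : Measure ℝ) {-β₀} = 0 := Real.volume_singleton
      have := measure_eq_zero_iff_ae_notMem.mp h0
      filter_upwards [this] with t ht
      simpa using ht
    filter_upwards [hae] with t ht _
    have h1 : HasDerivAt (fun x => Hr |t+a| x) (gp (|t+a| + β₀) - gp (|t+a| - β₀)) β₀ :=
      hasDeriv_Hr1 _ _
    have h2 : HasDerivAt (fun x => Hr |t+x| a)
        (sg (t+β₀) * (gp (t+β₀-a) + gp (t+β₀+a))) β₀ :=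
      hasDeriv_Hr2 t a β₀ (fun h => ht (by linarith))
    have h3 := (h1.add h2).const_mul (gp t)
    unfold ddf
    refine h3.congr_deriv ?_
    rw [show t+a+β₀ = (t+a)+β₀ by ring, show t+a-β₀ = (t+a)-β₀ by ring, ← eq_sg1 (t+a) β₀]

lemma Rf_hasDeriv (a c β₀ : ℝ) : HasDerivAt (Rf a c) (DD a c β₀) β₀ := (Rf_key a c β₀).2

lemma expEven (x : ℝ) : Real.exp (-(-x)^2/4) = Real.exp (-x^2/4) := by rw [neg_sq]

lemma piece (p q t : ℝ) : ∫ z in p..q, gp z * gp (z+t)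
    = (2*Real.pi)⁻¹ * Real.exp (-t^2/4) * (Eg (q + t/2) - Eg (p + t/2)) := by
  have hpt : ∀ z : ℝ, gp z * gp (z+t)
      = (2*Real.pi)⁻¹ * Real.exp (-t^2/4) * Real.exp (-(z+t/2)^2) := by
    intro z
    rw [gp, gp]
    have h1 : (Real.sqrt (2*Real.pi))⁻¹ * Real.exp (-z^2/2) * ((Real.sqrt (2*Real.pi))⁻¹ * Real.exp (-(z+t)^2/2))
        = ((Real.sqrt (2*Real.pi))⁻¹ * (Real.sqrt (2*Real.pi))⁻¹) * (Real.exp (-z^2/2) * Real.exp (-(z+t)^2/2)) := by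
      ring
    rw [h1, ← Real.exp_add, ← mul_inv,
      Real.mul_self_sqrt (by positivity : (0:ℝ) ≤ 2*Real.pi)]
    rw [show -z^2/2 + -(z+t)^2/2 = -t^2/4 + -(z+t/2)^2 by ring, Real.exp_add]
    ring
  have h2 : ∫ z in p..q, gp z * gp (z+t)
      = (2*Real.pi)⁻¹ * Real.exp (-t^2/4) * ∫ z in p..q, Real.exp (-(z+t/2)^2) := by
    rw [← intervalIntegral.integral_const_mul]
    apply intervalIntegral.integral_congr
    intro z _
    exact hpt z
  rw [h2]
  congr 1
  have h3 : ∀ z : ℝ, Real.exp (-(z+t/2)^2) = (fun x => Real.exp (-x^2)) (z + t/2) := fun z => rfl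
  rw [intervalIntegral.integral_congr (g := fun z => (fun x => Real.exp (-x^2)) (z + t/2)) (fun z _ => h3 z),
    intervalIntegral.integral_comp_add_right (fun x => Real.exp (-x^2)) (t/2), ← Eg_sub]

lemma sg_pos {x : ℝ} (h : 0 ≤ x) : sg x = 1 := if_neg (not_lt.mpr h)
lemma sg_neg {x : ℝ} (h : x < 0) : sg x = -1 := if_pos h

lemma ae_ne (x0 : ℝ) : ∀ᵐ z : ℝ ∂(volume : Measure ℝ), z ≠ x0 := by
  have h0 : (volume : Measure ℝ) {x0} = 0 := Real.volume_singleton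
  filter_upwards [measure_eq_zero_iff_ae_notMem.mp h0] with z hz
  simpa using hz

lemma contProd (t : ℝ) : Continuous fun z : ℝ => gp z * gp (z + t) :=
  gp_cont.mul (gp_cont.comp (continuous_id.add continuous_const))

open scoped Interval in
lemma DDpiece (a β p q s1 s2 : ℝ)
    (h : ∀ᵐ z ∂(volume : Measure ℝ), z ∈ Ι p q → sg (z+a) = s1 ∧ sg (z+β) = s2) :
    ∫ z in p..q, ddf a β z
    = (2*Real.pi)⁻¹ * (s1 * (Real.exp (-(a+β)^2/4) * (Eg (q + (a+β)/2) - Eg (p + (a+β)/2))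
                       - Real.exp (-(a-β)^2/4) * (Eg (q + (a-β)/2) - Eg (p + (a-β)/2)))
       + s2 * (Real.exp (-(β-a)^2/4) * (Eg (q + (β-a)/2) - Eg (p + (β-a)/2))
                       + Real.exp (-(β+a)^2/4) * (Eg (q + (β+a)/2) - Eg (p + (β+a)/2)))) := by
  have hcongr : ∫ z in p..q, ddf a β z = ∫ z in p..q,
      (s1 * (gp z * gp (z+(a+β))) - s1 * (gp z * gp (z+(a-β)))
       + (s2 * (gp z * gp (z+(β-a))) + s2 * (gp z * gp (z+(β+a))))) := by
    apply intervalIntegral.integral_congr_ae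
    filter_upwards [h] with z hz hzI
    obtain ⟨h1, h2⟩ := hz hzI
    simp only [ddf, h1, h2]
    ring_nf
  rw [hcongr]
  rw [intervalIntegral.integral_add
      ((((continuous_const.fun_mul (contProd (a+β)) : Continuous fun z => s1 * _)).fun_sub ((continuous_const.fun_mul (contProd (a-β)) : Continuous fun z => s1 * _))).intervalIntegrable _ _)
      ((((continuous_const.fun_mul (contProd (β-a)) : Continuous fun z => s2 * _)).fun_add ((continuous_const.fun_mul (contProd (β+a)) : Continuous fun z => s2 * _))).intervalIntegrable _ _),
    intervalIntegral.integral_sub (((continuous_const.fun_mul (contProd (a+β)) : Continuous fun z => s1 * _)).intervalIntegrable _ _)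
      (((continuous_const.fun_mul (contProd (a-β)) : Continuous fun z => s1 * _)).intervalIntegrable _ _),
    intervalIntegral.integral_add (((continuous_const.fun_mul (contProd (β-a)) : Continuous fun z => s2 * _)).intervalIntegrable _ _)
      (((continuous_const.fun_mul (contProd (β+a)) : Continuous fun z => s2 * _)).intervalIntegrable _ _),
    intervalIntegral.integral_const_mul, intervalIntegral.integral_const_mul,
    intervalIntegral.integral_const_mul, intervalIntegral.integral_const_mul,
    piece, piece, piece, piece]
  ring

lemma twopi_inv_pos : (0:ℝ) < (2*Real.pi)⁻¹ := by positivity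

open scoped Interval in
lemma DD_nonneg {a c β : ℝ} (hβ0 : 0 ≤ β) (hβa : β ≤ a) (hc : 0 < c) : 0 ≤ DD a c β := by
  rcases le_or_gt c β with h3 | hβc
  · -- case 3 : c ≤ β
    have hae : ∀ᵐ z ∂(volume : Measure ℝ), z ∈ Ι (-c) c → sg (z+a) = 1 ∧ sg (z+β) = 1 := by
      filter_upwards with z hz
      rw [Set.uIoc_of_le (by linarith : -c ≤ c)] at hz
      have hz1 : -c < z := hz.1
      constructor
      · exact sg_pos (by linarith)
      · exact sg_pos (by linarith)
    rw [DD, DDpiece a β (-c) c 1 1 hae]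
    rw [show β+a = a+β by ring, show β-a = -(a-β) by ring, expEven (a-β),
      show -c+(a+β)/2 = -(c-(a+β)/2) by ring, Eg_neg (c-(a+β)/2),
      show -c+(a-β)/2 = -(c-(a-β)/2) by ring, Eg_neg (c-(a-β)/2),
      show c+(-(a-β))/2 = c-(a-β)/2 by ring,
      show -c+(-(a-β))/2 = -(c+(a-β)/2) by ring, Eg_neg (c+(a-β)/2)]
    apply mul_nonneg (le_of_lt twopi_inv_pos)
    have hm := Eg_mono (show -(c+(a+β)/2) ≤ c-(a+β)/2 by linarith)
    have hn := Eg_neg (c+(a+β)/2)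
    nlinarith [Real.exp_pos (-(a+β)^2/4)]
  · -- β < c
    have hmem : ∀ x : ℝ, -c ≤ x → x ≤ c → x ∈ Set.uIcc (-c) c := by
      intro x h1 h2
      rw [Set.uIcc_of_le (by linarith : -c ≤ c)]
      exact ⟨h1, h2⟩
    rcases le_or_gt c a with h2 | h1c
    · -- case 2 : β < c ≤ a
      have int1 : IntervalIntegrable (ddf a β) volume (-c) (-β) :=
        ((Rf_key a c β).1).mono_set
          (Set.uIcc_subset_uIcc (hmem _ le_rfl (by linarith)) (hmem _ (by linarith) (by linarith)))
      have int2 : IntervalIntegrable (ddf a β) volume (-β) c :=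
        ((Rf_key a c β).1).mono_set
          (Set.uIcc_subset_uIcc (hmem _ (by linarith) (by linarith)) (hmem _ (by linarith) le_rfl))
      have hsplit := intervalIntegral.integral_add_adjacent_intervals int1 int2
      have hae1 : ∀ᵐ z ∂(volume : Measure ℝ), z ∈ Ι (-c) (-β) → sg (z+a) = 1 ∧ sg (z+β) = -1 := by
        filter_upwards [ae_ne (-β)] with z hz hzI
        rw [Set.uIoc_of_le (by linarith : -c ≤ -β)] at hzI
        refine ⟨sg_pos (by linarith [hzI.1]), sg_neg ?_⟩
        have := lt_of_le_of_ne hzI.2 hz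
        linarith
      have hae2 : ∀ᵐ z ∂(volume : Measure ℝ), z ∈ Ι (-β) c → sg (z+a) = 1 ∧ sg (z+β) = 1 := by
        filter_upwards with z hzI
        rw [Set.uIoc_of_le (by linarith : -β ≤ c)] at hzI
        exact ⟨sg_pos (by linarith [hzI.1]), sg_pos (by linarith [hzI.1])⟩
      rw [DD, ← hsplit, DDpiece a β (-c) (-β) 1 (-1) hae1, DDpiece a β (-β) c 1 1 hae2]
      rw [show β+a = a+β by ring, show β-a = -(a-β) by ring, expEven (a-β),
        show -β+(a+β)/2 = (a-β)/2 by ring,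
        show -c+(a+β)/2 = -(c-(a+β)/2) by ring, Eg_neg (c-(a+β)/2),
        show -c+(a-β)/2 = -(c-(a-β)/2) by ring, Eg_neg (c-(a-β)/2),
        show -β+(-(a-β))/2 = -((a+β)/2) by ring, Eg_neg ((a+β)/2),
        show -c+(-(a-β))/2 = -(c+(a-β)/2) by ring, Eg_neg (c+(a-β)/2),
        show c+(-(a-β))/2 = c-(a-β)/2 by ring]
      have hM := master (u := (a-β)/2) (v := (a+β)/2) (l1 := (a-β)/2) (m1 := c+(a+β)/2)
        (l2 := (a+β)/2) (m2 := c+(a-β)/2) (by linarith) (by linarith) (by linarith)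
        (by linarith) (by linarith) (by nlinarith) (by nlinarith)
      rw [show -((a-β)/2)^2 = -(a-β)^2/4 by ring, show -((a+β)/2)^2 = -(a+β)^2/4 by ring] at hM
      have hM' := mul_le_mul_of_nonneg_left hM (le_of_lt twopi_inv_pos)
      linarith [hM']
    · -- case 1 : β ≤ a < c
      have int1 : IntervalIntegrable (ddf a β) volume (-c) (-a) :=
        ((Rf_key a c β).1).mono_set
          (Set.uIcc_subset_uIcc (hmem _ le_rfl (by linarith)) (hmem _ (by linarith) (by linarith)))
      have int2 : IntervalIntegrable (ddf a β) volume (-a) (-β) :=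
        ((Rf_key a c β).1).mono_set
          (Set.uIcc_subset_uIcc (hmem _ (by linarith) (by linarith)) (hmem _ (by linarith) (by linarith)))
      have int3 : IntervalIntegrable (ddf a β) volume (-β) c :=
        ((Rf_key a c β).1).mono_set
          (Set.uIcc_subset_uIcc (hmem _ (by linarith) (by linarith)) (hmem _ (by linarith) le_rfl))
      have hsplit1 := intervalIntegral.integral_add_adjacent_intervals int1 int2
      have hsplit2 := intervalIntegral.integral_add_adjacent_intervals (int1.trans int2) int3
      have hae1 : ∀ᵐ z ∂(volume : Measure ℝ), z ∈ Ι (-c) (-a) → sg (z+a) = -1 ∧ sg (z+β) = -1 := by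
        filter_upwards [ae_ne (-a)] with z hz hzI
        rw [Set.uIoc_of_le (by linarith : -c ≤ -a)] at hzI
        have hlt : z < -a := lt_of_le_of_ne hzI.2 hz
        exact ⟨sg_neg (by linarith), sg_neg (by linarith)⟩
      have hae2 : ∀ᵐ z ∂(volume : Measure ℝ), z ∈ Ι (-a) (-β) → sg (z+a) = 1 ∧ sg (z+β) = -1 := by
        filter_upwards [ae_ne (-β)] with z hz hzI
        rw [Set.uIoc_of_le (by linarith : -a ≤ -β)] at hzI
        have hlt : z < -β := lt_of_le_of_ne hzI.2 hz
        exact ⟨sg_pos (by linarith [hzI.1]), sg_neg (by linarith)⟩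
      have hae3 : ∀ᵐ z ∂(volume : Measure ℝ), z ∈ Ι (-β) c → sg (z+a) = 1 ∧ sg (z+β) = 1 := by
        filter_upwards with z hzI
        rw [Set.uIoc_of_le (by linarith : -β ≤ c)] at hzI
        exact ⟨sg_pos (by linarith [hzI.1]), sg_pos (by linarith [hzI.1])⟩
      rw [DD, ← hsplit2, ← hsplit1, DDpiece a β (-c) (-a) (-1) (-1) hae1,
        DDpiece a β (-a) (-β) 1 (-1) hae2, DDpiece a β (-β) c 1 1 hae3]
      rw [show β+a = a+β by ring, show β-a = -(a-β) by ring, expEven (a-β),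
        show -β+(a+β)/2 = (a-β)/2 by ring,
        show -c+(a+β)/2 = -(c-(a+β)/2) by ring, Eg_neg (c-(a+β)/2),
        show -c+(a-β)/2 = -(c-(a-β)/2) by ring, Eg_neg (c-(a-β)/2),
        show -β+(-(a-β))/2 = -((a+β)/2) by ring, Eg_neg ((a+β)/2),
        show -c+(-(a-β))/2 = -(c+(a-β)/2) by ring, Eg_neg (c+(a-β)/2),
        show c+(-(a-β))/2 = c-(a-β)/2 by ring,
        show -a+(a+β)/2 = -((a-β)/2) by ring, Eg_neg ((a-β)/2),
        show -a+(a-β)/2 = -((a+β)/2) by ring, Eg_neg ((a+β)/2),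
        show -a+(-(a-β))/2 = -((3*a-β)/2) by ring, Eg_neg ((3*a-β)/2)]
      have hM := master (u := (a-β)/2) (v := (a+β)/2) (l1 := c-(a+β)/2) (m1 := c+(a+β)/2)
        (l2 := c-(a-β)/2) (m2 := c+(a-β)/2) (by linarith) (by linarith) (by linarith)
        (by linarith) (by linarith)
        (by nlinarith [mul_nonneg (show (0:ℝ) ≤ (a+β)/2-(a-β)/2 by linarith)
              (show (0:ℝ) ≤ c-((a+β)/2+(a-β)/2) by linarith)])
        (by nlinarith)
      rw [show -((a-β)/2)^2 = -(a-β)^2/4 by ring, show -((a+β)/2)^2 = -(a+β)^2/4 by ring] at hM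
      have hM' := mul_le_mul_of_nonneg_left hM (le_of_lt twopi_inv_pos)
      linarith [hM']

lemma Rf_mono {a c : ℝ} (hc : 0 < c) {b : ℝ} (hb0 : 0 ≤ b) (hba : b ≤ a) :
    Rf a c 0 ≤ Rf a c b := by
  have hmono : MonotoneOn (Rf a c) (Icc 0 a) := by
    apply monotoneOn_of_deriv_nonneg (convex_Icc 0 a)
    · exact fun x _ => (Rf_hasDeriv a c x).continuousAt.continuousWithinAt
    · exact fun x _ => (Rf_hasDeriv a c x).differentiableAt.differentiableWithinAt
    · intro x hx
      rw [interior_Icc] at hx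
      rw [(Rf_hasDeriv a c x).deriv]
      exact DD_nonneg (le_of_lt hx.1) (le_of_lt hx.2) hc
  exact hmono ⟨le_refl 0, by linarith⟩ ⟨hb0, hba⟩ hb0

noncomputable def Q1 (c m1 m2 : ℝ) : ℝ := ∫ z in (-c)..c, gp z * Hr |z+m1| m2

lemma contQ1int (m1 m2 : ℝ) : Continuous fun z : ℝ => gp z * Hr (|z+m1|) m2 := by
  apply gp_cont.mul
  unfold Hr
  exact (Cg_cont.comp (by fun_prop)).sub (Cg_cont.comp (by fun_prop))

lemma Q1_nonneg {c : ℝ} (hc : 0 ≤ c) (m1 m2 : ℝ) : 0 ≤ Q1 c m1 m2 := by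
  apply intervalIntegral.integral_nonneg (by linarith)
  intro z _
  exact mul_nonneg (gp_nonneg z) (Hr_nonneg m2 (abs_nonneg _))

lemma Q1_split (a β c : ℝ) : Rf a c β = Q1 c a β + Q1 c β a := by
  rw [Rf, Q1, Q1, ← intervalIntegral.integral_add
    ((contQ1int a β).intervalIntegrable _ _) ((contQ1int β a).intervalIntegrable _ _)]
  apply intervalIntegral.integral_congr
  intro z _
  ring

lemma Cg_neg (x : ℝ) : Cg (-x) = - Cg x := by
  have h1 : Cg (-x) = ∫ t in (0:ℝ)..(-x), gp (-t) := by
    rw [Cg]; congr 1; ext t; rw [gp_even]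
  rw [h1, intervalIntegral.integral_comp_neg gp, neg_zero, intervalIntegral.integral_symm,
    neg_neg]
  rfl

lemma Hr_even_m (w m : ℝ) : Hr w (-m) = Hr w m := by
  rw [Hr, Hr]
  rw [show w - -m = -(-w-m) by ring, Cg_neg, show -w - -m = -(w-m) by ring, Cg_neg]
  ring

lemma Q1_neg_left (c m1 m2 : ℝ) : Q1 c (-m1) m2 = Q1 c m1 m2 := by
  rw [Q1, Q1]
  have h1 : ∀ z : ℝ, gp z * Hr (|z + -m1|) m2
      = (fun t => gp t * Hr (|t + m1|) m2) (-z) := by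
    intro z
    simp only
    rw [gp_even, show -z + m1 = -(z + -m1) by ring, abs_neg]
  rw [intervalIntegral.integral_congr (g := fun z => (fun t => gp t * Hr (|t + m1|) m2) (-z))
    (fun z _ => h1 z), intervalIntegral.integral_comp_neg (fun t => gp t * Hr (|t + m1|) m2),
    neg_neg]

lemma Q1_neg_right (c m1 m2 : ℝ) : Q1 c m1 (-m2) = Q1 c m1 m2 := by
  rw [Q1, Q1]
  apply intervalIntegral.integral_congr
  intro z _
  simp only [Hr_even_m]

lemma Q1_abs (c m1 m2 : ℝ) : Q1 c m1 m2 = Q1 c |m1| |m2| := by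
  rcases le_or_gt 0 m1 with h1 | h1 <;> rcases le_or_gt 0 m2 with h2 | h2
  · rw [abs_of_nonneg h1, abs_of_nonneg h2]
  · rw [abs_of_nonneg h1, abs_of_neg h2, Q1_neg_right]
  · rw [abs_of_neg h1, abs_of_nonneg h2, Q1_neg_left]
  · rw [abs_of_neg h1, abs_of_neg h2, Q1_neg_left, Q1_neg_right]

lemma gpdf_eq : ProbabilityTheory.gaussianPDFReal 0 1 = gp := by
  ext x
  rw [ProbabilityTheory.gaussianPDFReal_def, gp]
  norm_num

open ProbabilityTheory

def Sset (c : ℝ) (ν : ℝ × ℝ) : Set (ℝ×ℝ) :=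
  {z | (|z.1| ≤ c ∧ |z.2+ν.2| < |z.1+ν.1|) ∨ (|z.2| ≤ c ∧ |z.1+ν.1| < |z.2+ν.2|)}

lemma contHr (m1 m2 : ℝ) : Continuous fun t : ℝ => Hr (|t+m1|) m2 := by
  unfold Hr
  exact (Cg_cont.comp (by fun_prop)).sub (Cg_cont.comp (by fun_prop))

lemma gauss_Ioo {p q : ℝ} (hpq : p ≤ q) :
    gaussianReal 0 1 (Set.Ioo p q) = ENNReal.ofReal (∫ x in p..q, gp x) := by
  rw [gaussianReal_apply_eq_integral 0 one_ne_zero, gpdf_eq]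
  congr 1
  rw [intervalIntegral.integral_of_le hpq, integral_Ioc_eq_integral_Ioo]

lemma gauss_slice (w m : ℝ) (hw : 0 ≤ w) :
    gaussianReal 0 1 {y : ℝ | |y + m| < w} = ENNReal.ofReal (Hr w m) := by
  have hset : {y : ℝ | |y + m| < w} = Set.Ioo (-w-m) (w-m) := by
    ext y
    simp only [Set.mem_setOf_eq, Set.mem_Ioo, abs_lt]
    constructor <;> intro h <;> constructor <;> linarith [h.1, h.2]
  rw [hset, gauss_Ioo (by linarith), Hr, Cg_sub]

lemma meas_S1 (c : ℝ) (ν : ℝ × ℝ) :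
    MeasurableSet {z : ℝ×ℝ | |z.1| ≤ c ∧ |z.2+ν.2| < |z.1+ν.1|} := by
  have : {z : ℝ×ℝ | |z.1| ≤ c ∧ |z.2+ν.2| < |z.1+ν.1|}
      = {z : ℝ×ℝ | |z.1| ≤ c} ∩ {z : ℝ×ℝ | |z.2+ν.2| < |z.1+ν.1|} := rfl
  rw [this]
  exact (measurableSet_le (measurable_fst.abs) measurable_const).inter
    (measurableSet_lt ((measurable_snd.add_const ν.2).abs) ((measurable_fst.add_const ν.1).abs))

lemma meas_S2 (c : ℝ) (ν : ℝ × ℝ) :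
    MeasurableSet {z : ℝ×ℝ | |z.2| ≤ c ∧ |z.1+ν.1| < |z.2+ν.2|} := by
  have : {z : ℝ×ℝ | |z.2| ≤ c ∧ |z.1+ν.1| < |z.2+ν.2|}
      = {z : ℝ×ℝ | |z.2| ≤ c} ∩ {z : ℝ×ℝ | |z.1+ν.1| < |z.2+ν.2|} := rfl
  rw [this]
  exact (measurableSet_le (measurable_snd.abs) measurable_const).inter
    (measurableSet_lt ((measurable_fst.add_const ν.1).abs) ((measurable_snd.add_const ν.2).abs))

lemma lint_gauss_Icc (c m1 m2 : ℝ) (hc : 0 < c) :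
    ∫⁻ x in Set.Icc (-c) c, ENNReal.ofReal (Hr (|x+m1|) m2) ∂(gaussianReal 0 1)
      = ENNReal.ofReal (Q1 c m1 m2) := by
  rw [gaussianReal_of_var_ne_zero 0 one_ne_zero, restrict_withDensity measurableSet_Icc,
    lintegral_withDensity_eq_lintegral_mul _ (measurable_gaussianPDF 0 1)
      ((contHr m1 m2).measurable.ennreal_ofReal)]
  have hcong : ∀ x : ℝ, (gaussianPDF 0 1 * fun t => ENNReal.ofReal (Hr (|t+m1|) m2)) x
      = ENNReal.ofReal (gp x * Hr (|x+m1|) m2) := by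
    intro x
    simp only [Pi.mul_apply, gaussianPDF_def, gpdf_eq]
    rw [← ENNReal.ofReal_mul (gp_nonneg x)]
  rw [lintegral_congr hcong,
    ← ofReal_integral_eq_lintegral_ofReal ((contQ1int m1 m2).integrableOn_Icc)
      (Filter.Eventually.of_forall fun x =>
        mul_nonneg (gp_nonneg x) (Hr_nonneg m2 (abs_nonneg _)))]
  congr 1
  rw [Q1, intervalIntegral.integral_of_le (by linarith : -c ≤ c),
    ← integral_Icc_eq_integral_Ioc]

lemma prod_S1 (c : ℝ) (hc : 0 < c) (ν : ℝ × ℝ) :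
    ((gaussianReal 0 1).prod (gaussianReal 0 1)) {z : ℝ×ℝ | |z.1| ≤ c ∧ |z.2+ν.2| < |z.1+ν.1|}
      = ENNReal.ofReal (Q1 c ν.1 ν.2) := by
  rw [Measure.prod_apply (meas_S1 c ν)]
  have hslice : ∀ x : ℝ, (gaussianReal 0 1) (Prod.mk x ⁻¹' {z : ℝ×ℝ | |z.1| ≤ c ∧ |z.2+ν.2| < |z.1+ν.1|})
      = Set.indicator (Set.Icc (-c) c) (fun t => ENNReal.ofReal (Hr (|t+ν.1|) ν.2)) x := by
    intro x
    rcases le_or_gt |x| c with hx | hx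
    · have hpre : Prod.mk x ⁻¹' {z : ℝ×ℝ | |z.1| ≤ c ∧ |z.2+ν.2| < |z.1+ν.1|}
          = {y : ℝ | |y + ν.2| < |x + ν.1|} := by
        ext y
        simp only [Set.mem_preimage, Set.mem_setOf_eq]
        exact ⟨fun h => h.2, fun h => ⟨hx, h⟩⟩
      rw [hpre, gauss_slice _ _ (abs_nonneg _),
        Set.indicator_of_mem (by rw [Set.mem_Icc]; exact abs_le.mp hx)]
    · have hpre : Prod.mk x ⁻¹' {z : ℝ×ℝ | |z.1| ≤ c ∧ |z.2+ν.2| < |z.1+ν.1|} = ∅ := by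
        ext y
        simp only [Set.mem_preimage, Set.mem_setOf_eq, Set.mem_empty_iff_false, iff_false]
        intro h
        exact absurd h.1 (not_le.mpr hx)
      rw [hpre, Set.indicator_of_notMem (by rw [Set.mem_Icc]; intro h; exact absurd (abs_le.mpr h) (not_le.mpr hx))]
      simp
  rw [lintegral_congr hslice, lintegral_indicator measurableSet_Icc, lint_gauss_Icc c ν.1 ν.2 hc]

lemma prod_S2 (c : ℝ) (hc : 0 < c) (ν : ℝ × ℝ) :
    ((gaussianReal 0 1).prod (gaussianReal 0 1)) {z : ℝ×ℝ | |z.2| ≤ c ∧ |z.1+ν.1| < |z.2+ν.2|}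
      = ENNReal.ofReal (Q1 c ν.2 ν.1) := by
  rw [Measure.prod_apply_symm (meas_S2 c ν)]
  have hslice : ∀ y : ℝ, (gaussianReal 0 1) ((fun x => (x, y)) ⁻¹' {z : ℝ×ℝ | |z.2| ≤ c ∧ |z.1+ν.1| < |z.2+ν.2|})
      = Set.indicator (Set.Icc (-c) c) (fun t => ENNReal.ofReal (Hr (|t+ν.2|) ν.1)) y := by
    intro y
    rcases le_or_gt |y| c with hy | hy
    · have hpre : (fun x => (x, y)) ⁻¹' {z : ℝ×ℝ | |z.2| ≤ c ∧ |z.1+ν.1| < |z.2+ν.2|}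
          = {x : ℝ | |x + ν.1| < |y + ν.2|} := by
        ext x
        simp only [Set.mem_preimage, Set.mem_setOf_eq]
        exact ⟨fun h => h.2, fun h => ⟨hy, h⟩⟩
      rw [hpre, gauss_slice _ _ (abs_nonneg _),
        Set.indicator_of_mem (by rw [Set.mem_Icc]; exact abs_le.mp hy)]
    · have hpre : (fun x => (x, y)) ⁻¹' {z : ℝ×ℝ | |z.2| ≤ c ∧ |z.1+ν.1| < |z.2+ν.2|} = ∅ := by
        ext x
        simp only [Set.mem_preimage, Set.mem_setOf_eq, Set.mem_empty_iff_false, iff_false]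
        intro h
        exact absurd h.1 (not_le.mpr hy)
      rw [hpre, Set.indicator_of_notMem (by rw [Set.mem_Icc]; intro h; exact absurd (abs_le.mpr h) (not_le.mpr hy))]
      simp
  rw [lintegral_congr hslice, lintegral_indicator measurableSet_Icc, lint_gauss_Icc c ν.2 ν.1 hc]

lemma prod_S (c : ℝ) (hc : 0 < c) (ν : ℝ × ℝ) :
    ((gaussianReal 0 1).prod (gaussianReal 0 1)) (Sset c ν)
      = ENNReal.ofReal (Q1 c ν.1 ν.2 + Q1 c ν.2 ν.1) := by
  have hun : Sset c ν = {z : ℝ×ℝ | |z.1| ≤ c ∧ |z.2+ν.2| < |z.1+ν.1|}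
      ∪ {z : ℝ×ℝ | |z.2| ≤ c ∧ |z.1+ν.1| < |z.2+ν.2|} := rfl
  have hdis : Disjoint {z : ℝ×ℝ | |z.1| ≤ c ∧ |z.2+ν.2| < |z.1+ν.1|}
      {z : ℝ×ℝ | |z.2| ≤ c ∧ |z.1+ν.1| < |z.2+ν.2|} := by
    rw [Set.disjoint_left]
    intro z h1 h2
    exact absurd h2.2 (not_lt.mpr (le_of_lt h1.2))
  rw [hun, measure_union hdis (meas_S2 c ν), prod_S1 c hc ν, prod_S2 c hc ν,
    ENNReal.ofReal_add (Q1_nonneg hc.le _ _) (Q1_nonneg hc.le _ _)]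

lemma meas_accB (ν : ℝ × ℝ) (c : ℝ) : MeasurableSet (accB ν c) := by
  have : accB ν c = ({y : ℝ×ℝ | |ν.1 - y.1| ≤ c} ∩ {y : ℝ×ℝ | |y.2| < |y.1|})
      ∪ ({y : ℝ×ℝ | |ν.2 - y.2| ≤ c} ∩ {y : ℝ×ℝ | |y.1| < |y.2|}) := rfl
  rw [this]
  exact ((measurableSet_le ((measurable_const.sub measurable_fst).abs) measurable_const).inter
      (measurableSet_lt measurable_snd.abs measurable_fst.abs)).union
    ((measurableSet_le ((measurable_const.sub measurable_snd).abs) measurable_const).inter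
      (measurableSet_lt measurable_fst.abs measurable_snd.abs))

lemma map_acc (c : ℝ) (hc : 0 < c) (ν : ℝ × ℝ) :
    Measure.map (fun z : ℝ × ℝ => z + ν) ((gaussianReal 0 1).prod (gaussianReal 0 1)) (accB ν c)
      = ENNReal.ofReal (Q1 c ν.1 ν.2 + Q1 c ν.2 ν.1) := by
  rw [Measure.map_apply (measurable_add_const ν) (meas_accB ν c)]
  have hpre : (fun z : ℝ × ℝ => z + ν) ⁻¹' accB ν c = Sset c ν := by
    ext z
    simp only [accB, Sset, Set.mem_preimage, Set.mem_setOf_eq, Prod.fst_add, Prod.snd_add]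
    rw [show ν.1 - (z.1 + ν.1) = -z.1 by ring, show ν.2 - (z.2 + ν.2) = -z.2 by ring,
      abs_neg, abs_neg]
  rw [hpre, prod_S c hc ν]

lemma main_ineq (μ : ℝ × ℝ) (c : ℝ) (hc : 0 < c) :
    Measure.map (fun z : ℝ × ℝ => z + (max |μ.1| |μ.2|, 0))
        ((gaussianReal 0 1).prod (gaussianReal 0 1)) (accB (max |μ.1| |μ.2|, 0) c)
      ≤ Measure.map (fun z : ℝ × ℝ => z + μ)
        ((gaussianReal 0 1).prod (gaussianReal 0 1)) (accB μ c) := by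
  rw [map_acc c hc (max |μ.1| |μ.2|, 0), map_acc c hc μ]
  apply ENNReal.ofReal_le_ofReal
  have habs : Q1 c μ.1 μ.2 + Q1 c μ.2 μ.1 = Q1 c |μ.1| |μ.2| + Q1 c |μ.2| |μ.1| := by
    rw [Q1_abs c μ.1 μ.2, Q1_abs c μ.2 μ.1]
  rw [habs]
  rcases le_total |μ.2| |μ.1| with hle | hle
  · have hA : max |μ.1| |μ.2| = |μ.1| := max_eq_left hle
    have hm := Rf_mono (a := |μ.1|) hc (abs_nonneg μ.2) hle
    rw [Q1_split, Q1_split] at hm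
    simp only [hA]
    linarith
  · have hA : max |μ.1| |μ.2| = |μ.2| := max_eq_right hle
    have hm := Rf_mono (a := |μ.2|) hc (abs_nonneg μ.1) hle
    rw [Q1_split, Q1_split] at hm
    simp only [hA]
    linarith

theorem stmt13 (μ : ℝ × ℝ) (c : ℝ) (hc : 0 < c) :
    Measure.map (fun z : ℝ × ℝ => z + (max |μ.1| |μ.2|, 0))
        ((gaussianReal 0 1).prod (gaussianReal 0 1)) (accB (max |μ.1| |μ.2|, 0) c)
      ≤ Measure.map (fun z : ℝ × ℝ => z + μ)
        ((gaussianReal 0 1).prod (gaussianReal 0 1)) (accB μ c) :=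
  main_ineq μ c hc
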